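/- Let n > 0 and m ≥ 1 be real numbers, and let (n_k)_{k≥1} be a nonincreasing sequence of nonnegative reals such that for every k ≥ 1, n_k ≥ (n − Σ_{j<k} n_j)/m. Then Σ_{j=1}^{⌈m⌉} n_j ≥ n/2. -/
import Mathlib


open Finset

/-- If `(n_k)_{k ≥ 1}` is nonincreasing, nonnegative, and satisfies
`n_k ≥ (n − Σ_{j<k} n_j)/m` for all `k ≥ 1` (with `n > 0`, `m ≥ 1`), then the first `⌈m⌉`
terms sum to at least `n/2`. -/
theorem halving_sequence (n m : ℝ) (hn : 0 < n) (hm : 1 ≤ m) (f : ℕ → ℝ)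
    (hnonneg : ∀ k, 1 ≤ k → 0 ≤ f k)
    (hmono : ∀ k, 1 ≤ k → f (k + 1) ≤ f k)
    (hrec : ∀ k, 1 ≤ k → (n - ∑ j ∈ Finset.Ico 1 k, f j) / m ≤ f k) :
    n / 2 ≤ ∑ j ∈ Finset.Icc 1 ⌈m⌉₊, f j := by
  set c := ⌈m⌉₊ with hc
  have hm0 : (0:ℝ) < m := lt_of_lt_of_le one_pos hm
  have hcm : m ≤ (c:ℝ) := Nat.le_ceil m
  have hc1 : 1 ≤ c := Nat.one_le_ceil_iff.mpr hm0
  set S := ∑ j ∈ Finset.Icc 1 c, f j with hS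
  by_contra h
  push_neg at h
  have hnS0 : 0 < n - S := by linarith
  -- antitone on [1, ∞)
  have hanti : ∀ a b, 1 ≤ a → a ≤ b → f b ≤ f a := by
    intro a b ha hab
    induction b with
    | zero => omega
    | succ k ih =>
      rcases Nat.lt_or_ge a (k+1) with hlt | hge
      · have hk : 1 ≤ k := by omega
        exact le_trans (hmono k hk) (ih (by omega))
      · have : a = k + 1 := by omega
        subst this; exact le_refl _
  -- each term in Icc 1 c is ≥ f c
  have hterm : ∀ j ∈ Finset.Icc 1 c, f c ≤ f j := by
    intro j hj
    simp only [Finset.mem_Icc] at hj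
    exact hanti j c hj.1 hj.2
  have hsum : (c:ℝ) * f c ≤ S := by
    have := Finset.card_nsmul_le_sum (Finset.Icc 1 c) f (f c) hterm
    simpa [Nat.card_Icc, nsmul_eq_mul] using this
  -- partial sum bound
  have hsub : ∑ j ∈ Finset.Ico 1 c, f j ≤ S := by
    apply Finset.sum_le_sum_of_subset_of_nonneg
    · intro x hx; simp only [Finset.mem_Ico] at hx; simp only [Finset.mem_Icc]; omega
    · intro i hi _; simp only [Finset.mem_Icc] at hi; exact hnonneg i hi.1
  have hfc : (n - S) / m ≤ f c := by
    have h1 := hrec c hc1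
    have h2 : (n - S) / m ≤ (n - ∑ j ∈ Finset.Ico 1 c, f j) / m := by
      gcongr
    linarith
  have hpos : 0 ≤ (n - S) / m := le_of_lt (div_pos hnS0 hm0)
  have key : n - S ≤ S := by
    have h3 : m * ((n - S) / m) ≤ (c:ℝ) * ((n - S) / m) :=
      mul_le_mul_of_nonneg_right hcm hpos
    have h4 : m * ((n - S) / m) = n - S := mul_div_cancel₀ _ (ne_of_gt hm0)
    have h5 : (c:ℝ) * ((n - S) / m) ≤ (c:ℝ) * f c :=
      mul_le_mul_of_nonneg_left hfc (by positivity)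
    linarith
  linarith
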